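/- For any binary word X, N_0(X) · N_{01}(X) = N_{010}(X) + 2·N_{001}(X) + N_{01}(X). -/
import Mathlib


def patCount (w X : List Bool) : ℕ := X.sublists.count w

lemma count_eq_sum (l : List (List Bool)) (w : List Bool) :
    (l.map (fun x => if x = w then 1 else 0)).sum = l.count w := by
  induction l with
  | nil => simp
  | cons x l ih =>
    simp only [List.map_cons, List.sum_cons, List.count_cons, ih]
    by_cases h : x = w <;> simp [h] <;> omega

lemma patCount_nil (X : List Bool) : patCount [] X = 1 := by
  induction X with
  | nil => simp [patCount]
  | cons a X ih =>
    unfold patCount at *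
    rw [List.sublists_cons, List.bind_eq_flatMap, List.count_flatMap]
    have h1 : (List.map (List.count ([] : List Bool) ∘ fun x => [x, a :: x]) X.sublists)
        = List.map (fun x => if x = ([] : List Bool) then 1 else 0) X.sublists := by
      apply List.map_congr_left
      intro x _
      by_cases h : x = ([] : List Bool) <;> simp [List.count_cons, Function.comp, h]
    rw [h1, count_eq_sum, ih]

lemma patCount_cons (b : Bool) (w : List Bool) (a : Bool) (X : List Bool) :
    patCount (b :: w) (a :: X)
      = patCount (b :: w) X + if a = b then patCount w X else 0 := by
  unfold patCount
  rw [List.sublists_cons, List.bind_eq_flatMap, List.count_flatMap]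
  have h1 : (List.map (List.count (b :: w) ∘ fun x => [x, a :: x]) X.sublists)
      = List.map (fun x => (if x = b :: w then 1 else 0)
          + (if a = b ∧ x = w then 1 else 0)) X.sublists := by
    apply List.map_congr_left
    intro x _
    have : (a :: x = b :: w) ↔ (a = b ∧ x = w) := by simp
    by_cases h : x = b :: w <;> by_cases h2 : a = b ∧ x = w <;>
      simp_all [List.count_cons, Function.comp]
  rw [h1]
  have h2 : (List.map (fun x => (if x = b :: w then 1 else 0)
        + (if a = b ∧ x = w then 1 else 0)) X.sublists).sum
      = (List.map (fun x => if x = b :: w then 1 else 0) X.sublists).sum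
        + (List.map (fun x => if a = b ∧ x = w then 1 else 0) X.sublists).sum := by
    induction X.sublists with
    | nil => simp
    | cons y l ih => simp [ih]; ring
  rw [h2, count_eq_sum]
  by_cases h : a = b
  · simp only [h, true_and, if_true]
    rw [count_eq_sum]
  · simp [h]

lemma patCount_nil_X (b : Bool) (w : List Bool) : patCount (b :: w) [] = 0 := by
  simp [patCount]

lemma N0N1 (X : List Bool) :
    patCount [false] X * patCount [true] X
      = patCount [false, true] X + patCount [true, false] X := by
  induction X with
  | nil => simp [patCount_nil_X]
  | cons a X ih =>
    cases a <;>
      simp only [patCount_cons, patCount_nil, if_true, if_false,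
        Bool.false_eq_true, Bool.true_eq_false, reduceIte] <;> ring_nf <;> omega

theorem N0_mul_N01 (X : List Bool) :
    patCount [false] X * patCount [false, true] X
      = patCount [false, true, false] X + 2 * patCount [false, false, true] X
        + patCount [false, true] X := by
  induction X with
  | nil => simp [patCount_nil_X]
  | cons a X ih =>
    have h := N0N1 X
    cases a <;>
      simp only [patCount_cons, patCount_nil, if_true, if_false,
        Bool.false_eq_true, Bool.true_eq_false, reduceIte] <;> ring_nf <;> nlinarith [h, ih]
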